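/- Evaluating a proof given in reverse Polish notation is correct: if a list of labels, interpreted as an RPN program over a stack of expressions (where an assertion label pops its instantiated hypotheses and pushes its instantiated conclusion), terminates with a single expression e on the stack, then e is derivable in the deductive system from the hypotheses pushed as leaves. -/

import Mathlib

/-- Expressions built from variables and symbols with fixed arities. -/
inductive Term (Sym : Type) (ar : Sym → ℕ) : Type
  | var : ℕ → Term Sym ar
  | app : (s : Sym) → (Fin (ar s) → Term Sym ar) → Term Sym ar

/-- Apply a substitution homomorphically. -/
def Term.subst {Sym : Type} {ar : Sym → ℕ} (σ : ℕ → Term Sym ar) :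
    Term Sym ar → Term Sym ar
  | .var n => σ n
  | .app s a => .app s (fun i => Term.subst σ (a i))

/-- An assertion (rule schema): a finite list of hypothesis expressions
and a conclusion expression over variables. -/
structure Assertion (Sym : Type) (ar : Sym → ℕ) : Type where
  hyps : List (Term Sym ar)
  concl : Term Sym ar

/-- Derivability from a set `S` of assertions and a set `H` of hypothesis
expressions: the inductive closure under hypotheses and `σ`-instances of
assertions whose `σ`-instantiated hypotheses are all derivable. -/
inductive Deriv {Sym : Type} {ar : Sym → ℕ}
    (S : Set (Assertion Sym ar)) (H : Set (Term Sym ar)) :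
    Term Sym ar → Prop
  | hyp {e} : e ∈ H → Deriv S H e
  | app {A : Assertion Sym ar} {σ : ℕ → Term Sym ar} :
      A ∈ S → (∀ h ∈ A.hyps, Deriv S H (h.subst σ)) →
      Deriv S H (A.concl.subst σ)

/-- A step of an RPN (Metamath-style) proof: either push a hypothesis
expression, or apply an assertion with a substitution. -/
inductive Step (Sym : Type) (ar : Sym → ℕ) : Type
  | hyp : Term Sym ar → Step Sym ar
  | app : Assertion Sym ar → (ℕ → Term Sym ar) → Step Sym ar

attribute [local instance] Classical.propDecidable

/-- Evaluate one RPN step on a stack of expressions.  A hypothesis step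
pushes its expression; an assertion step pops the `σ`-instantiated
hypotheses (in order, topmost first) and pushes the `σ`-instance of the
conclusion.  Returns `none` if the stack does not match. -/
noncomputable def evalStep {Sym : Type} {ar : Sym → ℕ} :
    Step Sym ar → List (Term Sym ar) → Option (List (Term Sym ar))
  | .hyp e, st => some (e :: st)
  | .app A σ, st =>
      let n := A.hyps.length
      if st.take n = (A.hyps.map (Term.subst σ)).reverse then
        some (A.concl.subst σ :: st.drop n)
      else none

/-- Evaluate a list of RPN steps on a stack. -/
noncomputable def evalProof {Sym : Type} {ar : Sym → ℕ} :
    List (Step Sym ar) → List (Term Sym ar) →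
      Option (List (Term Sym ar))
  | [], st => some st
  | s :: p, st => (evalStep s st).bind (evalProof p)

/-- Soundness of RPN evaluation: if an RPN proof, all of whose assertion
steps use assertions from `S`, evaluates on the empty stack to a single
expression `e`, then `e` is derivable in the deductive system `S` from the
hypotheses pushed as leaves. -/
theorem rpn_eval_sound {Sym : Type} {ar : Sym → ℕ}
    (S : Set (Assertion Sym ar)) (p : List (Step Sym ar))
    (hS : ∀ A σ, Step.app A σ ∈ p → A ∈ S)
    (e : Term Sym ar) (h : evalProof p [] = some [e]) :
    Deriv S {x | Step.hyp x ∈ p} e := by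
  have key : ∀ (q : List (Step Sym ar)) (st st' : List (Term Sym ar))
      (H : Set (Term Sym ar)),
      (∀ A σ, Step.app A σ ∈ q → A ∈ S) →
      (∀ x, Step.hyp x ∈ q → x ∈ H) →
      (∀ x ∈ st, Deriv S H x) →
      evalProof q st = some st' → ∀ x ∈ st', Deriv S H x := by
    intro q
    induction q with
    | nil =>
      intro st st' H _ _ hst heq
      simp only [evalProof] at heq
      cases heq
      exact hst
    | cons s q ih =>
      intro st st' H hA hH hst heq
      simp only [evalProof, Option.bind] at heq
      cases s with
      | hyp t =>
        simp only [evalStep] at heq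
        refine ih (t :: st) st' H (fun A σ hm => hA A σ (by simp [hm]))
          (fun x hm => hH x (by simp [hm])) ?_ heq
        intro x hx
        rw [List.mem_cons] at hx
        rcases hx with rfl | hx
        · exact Deriv.hyp (hH x (by simp))
        · exact hst x hx
      | app A σ =>
        by_cases hcond :
            st.take A.hyps.length = (A.hyps.map (Term.subst σ)).reverse
        · simp only [evalStep, hcond, if_true, Option.bind_some] at heq
          refine ih _ st' H (fun A' σ' hm => hA A' σ' (by simp [hm]))
            (fun x hm => hH x (by simp [hm])) ?_ heq
          intro x hx
          rw [List.mem_cons] at hx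
          rcases hx with rfl | hx
          · refine Deriv.app (hA A σ (by simp)) ?_
            intro h hh
            apply hst
            have : h.subst σ ∈ st.take A.hyps.length := by
              rw [hcond]
              simp only [List.mem_reverse, List.mem_map]
              exact ⟨h, hh, rfl⟩
            exact List.mem_of_mem_take this
          · exact hst x (List.mem_of_mem_drop hx)
        · simp only [evalStep, hcond, if_false, Option.bind_none] at heq
          exact absurd heq (by simp)
  have := key p [] [e] {x | Step.hyp x ∈ p} hS (fun x hx => hx)
    (by simp) h
  exact this e (by simp)
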